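/- Let φ be a reduced Boolean formula defining a nonempty set S ⊆ {0,1}^n, let Q ⊆ [0,1]^n be a convex set containing S, and let ν ∈ ℤ≥1 be such that every inequality in standard form that is valid for S has notch at most ν. Then φ^ν(Q) = conv(S), where φ^1(Q) := φ(Q) and φ^{ℓ+1}(Q) := φ(φ^ℓ(Q)). -/

import Mathlib

/-- Reduced Boolean formulas: literals combined with `∧` and `∨`. -/
inductive Fml (n : ℕ) : Type
  | pos : Fin n → Fml n
  | neg : Fin n → Fml n
  | and : Fml n → Fml n → Fml n
  | or  : Fml n → Fml n → Fml n

namespace Fml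

/-- Evaluation of a reduced formula on a (0/1-valued) real point. -/
def eval {n : ℕ} : Fml n → (Fin n → ℝ) → Prop
  | pos i, x => x i = 1
  | neg i, x => x i = 0
  | and φ ψ, x => φ.eval x ∧ ψ.eval x
  | or φ ψ, x => φ.eval x ∨ ψ.eval x

/-- The set `φ(Q)` obtained by feeding the convex set `Q` into the formula `φ`. -/
def app {n : ℕ} : Fml n → Set (Fin n → ℝ) → Set (Fin n → ℝ)
  | pos i, Q => {x ∈ Q | x i = 1}
  | neg i, Q => {x ∈ Q | x i = 0}
  | and φ ψ, Q => φ.app Q ∩ ψ.app Q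
  | or φ ψ, Q => convexHull ℝ (φ.app Q ∪ ψ.app Q)

/-- Iterated application: `φ^0(Q) = Q` and `φ^{ℓ+1}(Q) = φ(φ^ℓ(Q))`. -/
def iterApp {n : ℕ} (φ : Fml n) : ℕ → Set (Fin n → ℝ) → Set (Fin n → ℝ)
  | 0, Q => Q
  | k + 1, Q => φ.app (φ.iterApp k Q)

end Fml

/-- The 0/1 points of the cube. -/
def CubeVerts (n : ℕ) : Set (Fin n → ℝ) := {x | ∀ i, x i = 0 ∨ x i = 1}

/-- The inequality in standard form determined by `I⁺ = Ip`, `I⁻ = Ipᶜ`, `c`, `δ`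
is valid for `T`. -/
def StdValid {n : ℕ} (Ip : Finset (Fin n)) (c : Fin n → ℝ) (δ : ℝ)
    (T : Set (Fin n → ℝ)) : Prop :=
  ∀ x ∈ T, δ ≤ ∑ i ∈ Ip, c i * x i + ∑ i ∈ Ipᶜ, c i * (1 - x i)

/-- The inequality in standard form with coefficients `c` and right-hand side `δ`
has notch at most `ν`. -/
def NotchLE {n : ℕ} (c : Fin n → ℝ) (δ : ℝ) (ν : ℕ) : Prop :=
  ∀ J : Finset (Fin n), ν ≤ J.card → δ ≤ ∑ j ∈ J, c j


namespace Fml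

theorem app_subset {n : ℕ} (φ : Fml n) (Q : Set (Fin n → ℝ)) (hQ : Convex ℝ Q) :
    φ.app Q ⊆ Q := by
  induction φ with
  | pos i => exact Set.sep_subset _ _
  | neg i => exact Set.sep_subset _ _
  | and φ ψ ih1 ih2 => exact (Set.inter_subset_left).trans ih1
  | or φ ψ ih1 ih2 => exact convexHull_min (Set.union_subset ih1 ih2) hQ

theorem app_convex {n : ℕ} (φ : Fml n) (Q : Set (Fin n → ℝ)) (hQ : Convex ℝ Q) :
    Convex ℝ (φ.app Q) := by
  induction φ with
  | pos i =>
      intro x hx y hy a b ha hb hab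
      refine ⟨hQ hx.1 hy.1 ha hb hab, ?_⟩
      show (a • x + b • y) i = 1
      simp only [Pi.add_apply, Pi.smul_apply, smul_eq_mul, hx.2, hy.2, mul_one]
      exact hab
  | neg i =>
      intro x hx y hy a b ha hb hab
      refine ⟨hQ hx.1 hy.1 ha hb hab, ?_⟩
      show (a • x + b • y) i = 0
      simp [hx.2, hy.2]
  | and φ ψ ih1 ih2 => exact ih1.inter ih2
  | or φ ψ ih1 ih2 => exact convex_convexHull ℝ _

theorem mem_app_of_eval {n : ℕ} (φ : Fml n) (Q : Set (Fin n → ℝ)) (x : Fin n → ℝ)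
    (hx : x ∈ Q) (he : φ.eval x) : x ∈ φ.app Q := by
  induction φ with
  | pos i => exact ⟨hx, he⟩
  | neg i => exact ⟨hx, he⟩
  | and φ ψ ih1 ih2 => exact ⟨ih1 he.1, ih2 he.2⟩
  | or φ ψ ih1 ih2 =>
      rcases he with h | h
      · exact subset_convexHull ℝ _ (Set.mem_union_left _ (ih1 h))
      · exact subset_convexHull ℝ _ (Set.mem_union_right _ (ih2 h))

theorem iterApp_convex {n : ℕ} (φ : Fml n) (Q : Set (Fin n → ℝ)) (hQ : Convex ℝ Q) :
    ∀ k, Convex ℝ (φ.iterApp k Q)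
  | 0 => hQ
  | k + 1 => app_convex φ _ (iterApp_convex φ Q hQ k)

theorem iterApp_subset {n : ℕ} (φ : Fml n) (Q : Set (Fin n → ℝ)) (hQ : Convex ℝ Q) :
    ∀ k, φ.iterApp k Q ⊆ Q
  | 0 => subset_rfl
  | k + 1 => (app_subset φ _ (iterApp_convex φ Q hQ k)).trans (iterApp_subset φ Q hQ k)

end Fml

theorem cube_sub_box {n : ℕ} : CubeVerts n ⊆ Set.Icc (0 : Fin n → ℝ) 1 := by
  intro x hx
  constructor
  · intro i
    rcases hx i with h | h <;> simp [h]
  · intro i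
    rcases hx i with h | h <;> simp [h]

def LF {n : ℕ} (Ip : Finset (Fin n)) (c : Fin n → ℝ) (x : Fin n → ℝ) : ℝ :=
  ∑ i ∈ Ip, c i * x i + ∑ i ∈ Ipᶜ, c i * (1 - x i)

theorem LF_nonneg {n : ℕ} (Ip : Finset (Fin n)) (c x : Fin n → ℝ)
    (hc : ∀ i, 0 ≤ c i) (hx : x ∈ Set.Icc (0 : Fin n → ℝ) 1) : 0 ≤ LF Ip c x := by
  have h0 : ∀ i, (0:ℝ) ≤ x i := fun i => hx.1 i
  have h1 : ∀ i, x i ≤ 1 := fun i => hx.2 i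
  have : ∀ i ∈ Ip, 0 ≤ c i * x i := fun i _ => mul_nonneg (hc i) (h0 i)
  have h2 : ∀ i ∈ Ipᶜ, 0 ≤ c i * (1 - x i) := fun i _ => mul_nonneg (hc i) (by linarith [h1 i])
  exact add_nonneg (Finset.sum_nonneg this) (Finset.sum_nonneg h2)

theorem LF_combo {n : ℕ} (Ip : Finset (Fin n)) (c : Fin n → ℝ) (x y : Fin n → ℝ)
    (a b : ℝ) (hab : a + b = 1) :
    LF Ip c (a • x + b • y) = a * LF Ip c x + b * LF Ip c y := by
  unfold LF
  simp only [Pi.add_apply, Pi.smul_apply, smul_eq_mul]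
  rw [mul_add, mul_add, Finset.mul_sum, Finset.mul_sum, Finset.mul_sum, Finset.mul_sum]
  rw [add_add_add_comm, ← Finset.sum_add_distrib, ← Finset.sum_add_distrib]
  congr 1
  · exact Finset.sum_congr rfl fun i _ => by ring
  · refine Finset.sum_congr rfl fun i _ => ?_
    linear_combination (-(c i)) * hab

theorem convex_LF_ge {n : ℕ} (Ip : Finset (Fin n)) (c : Fin n → ℝ) (δ : ℝ) :
    Convex ℝ {x : Fin n → ℝ | δ ≤ LF Ip c x} := by
  intro x hx y hy a b ha hb hab
  simp only [Set.mem_setOf_eq] at *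
  rw [LF_combo Ip c x y a b hab]
  calc δ = a * δ + b * δ := by rw [← add_mul, hab, one_mul]
  _ ≤ a * LF Ip c x + b * LF Ip c y := by
      exact add_le_add (mul_le_mul_of_nonneg_left hx ha) (mul_le_mul_of_nonneg_left hy hb)

/-- Splitting off one coordinate from `LF`. -/
theorem LF_split {n : ℕ} (Ip : Finset (Fin n)) (c : Fin n → ℝ) (x : Fin n → ℝ) (i : Fin n) :
    LF Ip c x = LF Ip (Function.update c i 0) x
      + (if i ∈ Ip then c i * x i else c i * (1 - x i)) := by
  unfold LF
  by_cases hi : i ∈ Ip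
  · simp only [hi, if_pos]
    have h1 : ∑ j ∈ Ip, c j * x j
        = ∑ j ∈ Ip, Function.update c i 0 j * x j + c i * x i := by
      rw [← Finset.sum_erase_add _ _ hi, ← Finset.sum_erase_add _ (fun j => Function.update c i 0 j * x j) hi]
      simp only [Function.update_self, zero_mul, add_zero]
      congr 1
      refine Finset.sum_congr rfl fun j hj => ?_
      rw [Function.update_of_ne (Finset.ne_of_mem_erase hj)]
    have h2 : ∑ j ∈ Ipᶜ, c j * (1 - x j) = ∑ j ∈ Ipᶜ, Function.update c i 0 j * (1 - x j) := by
      refine Finset.sum_congr rfl fun j hj => ?_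
      have : j ≠ i := by
        intro h; subst h; exact (Finset.mem_compl.mp hj) hi
      rw [Function.update_of_ne this]
    rw [h1, h2]; ring
  · simp only [hi, if_neg, if_false]
    have hi' : i ∈ Ipᶜ := Finset.mem_compl.mpr hi
    have h1 : ∑ j ∈ Ipᶜ, c j * (1 - x j)
        = ∑ j ∈ Ipᶜ, Function.update c i 0 j * (1 - x j) + c i * (1 - x i) := by
      rw [← Finset.sum_erase_add _ _ hi', ← Finset.sum_erase_add _ (fun j => Function.update c i 0 j * (1 - x j)) hi']
      simp only [Function.update_self, zero_mul, add_zero]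
      congr 1
      refine Finset.sum_congr rfl fun j hj => ?_
      rw [Function.update_of_ne (Finset.ne_of_mem_erase hj)]
    have h2 : ∑ j ∈ Ip, c j * x j = ∑ j ∈ Ip, Function.update c i 0 j * x j := by
      refine Finset.sum_congr rfl fun j hj => ?_
      have : j ≠ i := by intro h; subst h; exact hi hj
      rw [Function.update_of_ne this]
    rw [h1, h2]; ring

/-- Face extremality: a point of `convexHull DD` lying on a 0/1-face of the cube is in the
convex hull of the part of `DD` on that face. -/
theorem hull_face {n : ℕ} (DD : Set (Fin n → ℝ)) (hDD : DD ⊆ Set.Icc (0 : Fin n → ℝ) 1)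
    (D : Finset (Fin n)) (b : Fin n → ℝ) (hb : ∀ i ∈ D, b i = 0 ∨ b i = 1)
    (x : Fin n → ℝ) (hx : x ∈ convexHull ℝ DD) (hxF : ∀ i ∈ D, x i = b i) :
    x ∈ convexHull ℝ (DD ∩ {y | ∀ i ∈ D, y i = b i}) := by
  rw [convexHull_eq] at hx
  obtain ⟨ι, t, w, z, hw0, hw1, hz, hcm⟩ := hx
  classical
  have hxeq : x = ∑ a ∈ t, w a • z a := by
    rw [← hcm, Finset.centerMass_eq_of_sum_1 _ _ hw1]
  have hxi : ∀ i, x i = ∑ a ∈ t, w a * z a i := by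
    intro i
    rw [hxeq]
    simp [Finset.sum_apply]
  -- on each face-coordinate, every positive-weight generator matches the face value
  have key : ∀ i ∈ D, ∀ a ∈ t, w a ≠ 0 → z a i = b i := by
    intro i hi a ha hwa
    rcases hb i hi with hb0 | hb1
    · -- b i = 0
      have hsum : ∑ a ∈ t, w a * z a i = 0 := by
        rw [← hxi i, hxF i hi, hb0]
      have hnn : ∀ a ∈ t, 0 ≤ w a * z a i := fun a ha =>
        mul_nonneg (hw0 a ha) ((hDD (hz a ha)).1 i)
      have := (Finset.sum_eq_zero_iff_of_nonneg hnn).mp hsum a ha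
      rcases mul_eq_zero.mp this with h | h
      · exact absurd h hwa
      · rw [hb0]; exact h
    · -- b i = 1
      have hsum : ∑ a ∈ t, w a * (1 - z a i) = 0 := by
        have : ∑ a ∈ t, w a * (1 - z a i) = (∑ a ∈ t, w a) - ∑ a ∈ t, w a * z a i := by
          rw [← Finset.sum_sub_distrib]
          exact Finset.sum_congr rfl fun a _ => by ring
        rw [this, hw1, ← hxi i, hxF i hi, hb1, sub_self]
      have hnn : ∀ a ∈ t, 0 ≤ w a * (1 - z a i) := by
        intro a ha
        have h2 : z a i ≤ (1 : Fin n → ℝ) i := (hDD (hz a ha)).2 i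
        rw [Pi.one_apply] at h2
        exact mul_nonneg (hw0 a ha) (by linarith)
      have := (Finset.sum_eq_zero_iff_of_nonneg hnn).mp hsum a ha
      rcases mul_eq_zero.mp this with h | h
      · exact absurd h hwa
      · rw [hb1]; linarith
  -- restrict to positive-weight generators
  have hcm' : (t.filter fun a => w a ≠ 0).centerMass w z = x := by
    rw [Finset.centerMass_filter_ne_zero, hcm]
  rw [← hcm']
  refine Finset.centerMass_mem_convexHull _ (fun a ha => hw0 a (Finset.mem_filter.mp ha).1) ?_ ?_
  · rw [Finset.sum_filter_ne_zero, hw1]; exact one_pos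
  · intro a ha
    obtain ⟨hat, hwa⟩ := Finset.mem_filter.mp ha
    exact ⟨hz a hat, fun i hi => key i hi a hat hwa⟩


theorem master {n : ℕ} (φ : Fml n) (S Q : Set (Fin n → ℝ))
    (hS : S = {x ∈ CubeVerts n | φ.eval x})
    (hQconv : Convex ℝ Q) (hQcube : Q ⊆ Set.Icc (0 : Fin n → ℝ) 1) :
    ∀ (k : ℕ) (D : Finset (Fin n)) (b : Fin n → ℝ),
      (∀ i ∈ D, b i = 0 ∨ b i = 1) →
      ∀ (Ip : Finset (Fin n)) (c : Fin n → ℝ) (δ : ℝ),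
        (∀ i, 0 ≤ c i) →
        (∀ i ∈ D, c i = 0) →
        (∀ s ∈ S, (∀ i ∈ D, s i = b i) → δ ≤ LF Ip c s) →
        (∀ J : Finset (Fin n), Disjoint J D → k ≤ J.card → δ ≤ ∑ j ∈ J, c j) →
        ∀ x, x ∈ φ.iterApp k Q → (∀ i ∈ D, x i = b i) → δ ≤ LF Ip c x := by
  intro k
  induction k with
  | zero =>
      intro D b hb Ip c δ hc hcD hvalid hnotch x hx hxF
      have h0 : δ ≤ 0 := by
        have := hnotch ∅ (Finset.disjoint_left.mpr (by simp)) (Nat.zero_le _)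
        simpa using this
      exact h0.trans (LF_nonneg Ip c x hc (hQcube hx))
  | succ k IH =>
      intro D b hb Ip c δ hc hcD hvalid hnotch x hx hxF
      have hxbox : x ∈ Set.Icc (0 : Fin n → ℝ) 1 :=
        hQcube (Fml.iterApp_subset φ Q hQconv (k+1) hx)
      by_cases hδ0 : δ ≤ 0
      · exact hδ0.trans (LF_nonneg Ip c x hc hxbox)
      push_neg at hδ0
      classical
      set v : Fin n → ℝ := fun j => if j ∈ D then b j else if j ∈ Ip then 0 else 1 with hv
      set T := φ.iterApp k Q with hT
      have hTconv : Convex ℝ T := Fml.iterApp_convex φ Q hQconv k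
      have hTbox : T ⊆ Set.Icc (0 : Fin n → ℝ) 1 :=
        (Fml.iterApp_subset φ Q hQconv k).trans hQcube
      have tree : ∀ ψ : Fml n,
          (∀ y, y ∈ ψ.app T → (∀ i ∈ D, y i = b i) → δ ≤ LF Ip c y) ∨ ψ.eval v := by
        intro ψ
        induction ψ with
        | pos i =>
            by_cases hiD : i ∈ D
            · by_cases hbi : b i = 1
              · right
                show v i = 1
                simp [hv, hiD, hbi]
              · left
                intro y hy hyF
                exfalso
                have h1 : y i = 1 := hy.2
                have h2 : y i = b i := hyF i hiD
                rcases hb i hiD with h3 | h3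
                · rw [h1, h3] at h2; exact one_ne_zero h2
                · exact hbi h3
            · by_cases hiIp : i ∈ Ip
              · left
                intro y hy hyF
                have hyT : y ∈ T := hy.1
                have hyi : y i = 1 := hy.2
                have key := IH (insert i D) (Function.update b i 1)
                  (by
                    intro j hj
                    rcases Finset.mem_insert.mp hj with rfl | hjD
                    · right; simp
                    · have hji : j ≠ i := by rintro rfl; exact hiD hjD
                      rw [Function.update_of_ne hji]; exact hb j hjD)
                  Ip (Function.update c i 0) (max (δ - c i) 0)
                  (by
                    intro j
                    by_cases hji : j = i
                    · subst hji; simp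
                    · rw [Function.update_of_ne hji]; exact hc j)
                  (by
                    intro j hj
                    rcases Finset.mem_insert.mp hj with rfl | hjD
                    · simp
                    · have hji : j ≠ i := by rintro rfl; exact hiD hjD
                      rw [Function.update_of_ne hji]; exact hcD j hjD)
                  (by
                    intro s hsS hsF
                    have hsi : s i = 1 := by
                      have := hsF i (Finset.mem_insert_self i D); simpa using this
                    have hsD : ∀ j ∈ D, s j = b j := by
                      intro j hjD
                      have hji : j ≠ i := by rintro rfl; exact hiD hjD
                      have := hsF j (Finset.mem_insert_of_mem hjD)
                      rwa [Function.update_of_ne hji] at this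
                    have hδs := hvalid s hsS hsD
                    have hsplit := LF_split Ip c s i
                    rw [if_pos hiIp, hsi, mul_one] at hsplit
                    have hsbox : s ∈ Set.Icc (0 : Fin n → ℝ) 1 :=
                      cube_sub_box (by rw [hS] at hsS; exact hsS.1)
                    have hnn : 0 ≤ LF Ip (Function.update c i 0) s := by
                      refine LF_nonneg _ _ _ ?_ hsbox
                      intro j
                      by_cases hji : j = i
                      · subst hji; simp
                      · rw [Function.update_of_ne hji]; exact hc j
                    exact max_le (by linarith) hnn)
                  (by
                    intro J hJ hcard
                    have hiJ : i ∉ J := by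
                      intro hiJ
                      exact (Finset.disjoint_left.mp hJ hiJ) (Finset.mem_insert_self i D)
                    have hJD : Disjoint J D := by
                      refine Finset.disjoint_left.mpr ?_
                      intro a haJ haD
                      exact (Finset.disjoint_left.mp hJ haJ) (Finset.mem_insert_of_mem haD)
                    have hJ' : Disjoint (insert i J) D := by
                      refine Finset.disjoint_left.mpr ?_
                      intro a haJ haD
                      rcases Finset.mem_insert.mp haJ with rfl | haJ
                      · exact hiD haD
                      · exact (Finset.disjoint_left.mp hJD haJ) haD
                    have hcard' : k + 1 ≤ (insert i J).card := by
                      rw [Finset.card_insert_of_notMem hiJ]; omega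
                    have hδJ := hnotch (insert i J) hJ' hcard'
                    rw [Finset.sum_insert hiJ] at hδJ
                    have hsum_eq : ∑ j ∈ J, Function.update c i 0 j = ∑ j ∈ J, c j := by
                      refine Finset.sum_congr rfl fun j hj => ?_
                      have hji : j ≠ i := fun h => hiJ (h ▸ hj)
                      rw [Function.update_of_ne hji]
                    rw [hsum_eq]
                    refine max_le (by linarith) (Finset.sum_nonneg fun j _ => hc j))
                  y hyT
                  (by
                    intro j hj
                    rcases Finset.mem_insert.mp hj with rfl | hjD
                    · simp [hyi]
                    · have hji : j ≠ i := by rintro rfl; exact hiD hjD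
                      rw [Function.update_of_ne hji]; exact hyF j hjD)
                have hsplit := LF_split Ip c y i
                rw [if_pos hiIp, hyi, mul_one] at hsplit
                have hmax : max (δ - c i) 0 ≥ δ - c i := le_max_left _ _
                linarith [key]
              · right
                show v i = 1
                simp [hv, hiD, hiIp]
        | neg i =>
            by_cases hiD : i ∈ D
            · by_cases hbi : b i = 0
              · right
                show v i = 0
                simp [hv, hiD, hbi]
              · left
                intro y hy hyF
                exfalso
                have h1 : y i = 0 := hy.2
                have h2 : y i = b i := hyF i hiD
                rcases hb i hiD with h3 | h3
                · exact hbi h3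
                · rw [h1, h3] at h2; exact one_ne_zero h2.symm
            · by_cases hiIp : i ∈ Ip
              · right
                show v i = 0
                simp [hv, hiD, hiIp]
              · left
                intro y hy hyF
                have hyT : y ∈ T := hy.1
                have hyi : y i = 0 := hy.2
                have key := IH (insert i D) (Function.update b i 0)
                  (by
                    intro j hj
                    rcases Finset.mem_insert.mp hj with rfl | hjD
                    · left; simp
                    · have hji : j ≠ i := by rintro rfl; exact hiD hjD
                      rw [Function.update_of_ne hji]; exact hb j hjD)
                  Ip (Function.update c i 0) (max (δ - c i) 0)
                  (by
                    intro j
                    by_cases hji : j = i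
                    · subst hji; simp
                    · rw [Function.update_of_ne hji]; exact hc j)
                  (by
                    intro j hj
                    rcases Finset.mem_insert.mp hj with rfl | hjD
                    · simp
                    · have hji : j ≠ i := by rintro rfl; exact hiD hjD
                      rw [Function.update_of_ne hji]; exact hcD j hjD)
                  (by
                    intro s hsS hsF
                    have hsi : s i = 0 := by
                      have := hsF i (Finset.mem_insert_self i D); simpa using this
                    have hsD : ∀ j ∈ D, s j = b j := by
                      intro j hjD
                      have hji : j ≠ i := by rintro rfl; exact hiD hjD
                      have := hsF j (Finset.mem_insert_of_mem hjD)
                      rwa [Function.update_of_ne hji] at this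
                    have hδs := hvalid s hsS hsD
                    have hsplit := LF_split Ip c s i
                    rw [if_neg hiIp, hsi] at hsplit
                    norm_num at hsplit
                    have hsbox : s ∈ Set.Icc (0 : Fin n → ℝ) 1 :=
                      cube_sub_box (by rw [hS] at hsS; exact hsS.1)
                    have hnn : 0 ≤ LF Ip (Function.update c i 0) s := by
                      refine LF_nonneg _ _ _ ?_ hsbox
                      intro j
                      by_cases hji : j = i
                      · subst hji; simp
                      · rw [Function.update_of_ne hji]; exact hc j
                    exact max_le (by linarith) hnn)
                  (by
                    intro J hJ hcard
                    have hiJ : i ∉ J := by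
                      intro hiJ
                      exact (Finset.disjoint_left.mp hJ hiJ) (Finset.mem_insert_self i D)
                    have hJD : Disjoint J D := by
                      refine Finset.disjoint_left.mpr ?_
                      intro a haJ haD
                      exact (Finset.disjoint_left.mp hJ haJ) (Finset.mem_insert_of_mem haD)
                    have hJ' : Disjoint (insert i J) D := by
                      refine Finset.disjoint_left.mpr ?_
                      intro a haJ haD
                      rcases Finset.mem_insert.mp haJ with rfl | haJ
                      · exact hiD haD
                      · exact (Finset.disjoint_left.mp hJD haJ) haD
                    have hcard' : k + 1 ≤ (insert i J).card := by
                      rw [Finset.card_insert_of_notMem hiJ]; omega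
                    have hδJ := hnotch (insert i J) hJ' hcard'
                    rw [Finset.sum_insert hiJ] at hδJ
                    have hsum_eq : ∑ j ∈ J, Function.update c i 0 j = ∑ j ∈ J, c j := by
                      refine Finset.sum_congr rfl fun j hj => ?_
                      have hji : j ≠ i := fun h => hiJ (h ▸ hj)
                      rw [Function.update_of_ne hji]
                    rw [hsum_eq]
                    refine max_le (by linarith) (Finset.sum_nonneg fun j _ => hc j))
                  y hyT
                  (by
                    intro j hj
                    rcases Finset.mem_insert.mp hj with rfl | hjD
                    · simp [hyi]
                    · have hji : j ≠ i := by rintro rfl; exact hiD hjD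
                      rw [Function.update_of_ne hji]; exact hyF j hjD)
                have hsplit := LF_split Ip c y i
                rw [if_neg hiIp, hyi] at hsplit
                norm_num at hsplit
                have hmax : max (δ - c i) 0 ≥ δ - c i := le_max_left _ _
                linarith [key]
        | and ψ₁ ψ₂ ih₁ ih₂ =>
            rcases ih₁ with h₁ | h₁
            · left; intro y hy hyF; exact h₁ y hy.1 hyF
            · rcases ih₂ with h₂ | h₂
              · left; intro y hy hyF; exact h₂ y hy.2 hyF
              · right; exact ⟨h₁, h₂⟩
        | or ψ₁ ψ₂ ih₁ ih₂ =>
            rcases ih₁ with h₁ | h₁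
            · rcases ih₂ with h₂ | h₂
              · left
                intro y hy hyF
                have hsub : ψ₁.app T ∪ ψ₂.app T ⊆ Set.Icc (0 : Fin n → ℝ) 1 :=
                  Set.union_subset ((Fml.app_subset _ _ hTconv).trans hTbox)
                    ((Fml.app_subset _ _ hTconv).trans hTbox)
                have hmem := hull_face _ hsub D b hb y hy hyF
                have hsubset : (ψ₁.app T ∪ ψ₂.app T) ∩ {z | ∀ i ∈ D, z i = b i}
                    ⊆ {z | δ ≤ LF Ip c z} := by
                  rintro z ⟨hz | hz, hzF⟩
                  · exact h₁ z hz hzF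
                  · exact h₂ z hz hzF
                exact convexHull_min hsubset (convex_LF_ge Ip c δ) hmem
              · right; exact Or.inr h₂
            · right; exact Or.inl h₁
      rcases tree φ with h | h
      · exact h x hx hxF
      · exfalso
        have hvC : v ∈ CubeVerts n := by
          intro j
          by_cases hjD : j ∈ D
          · simpa [hv, hjD] using hb j hjD
          · by_cases hjIp : j ∈ Ip <;> simp [hv, hjD, hjIp]
        have hvS : v ∈ S := by rw [hS]; exact ⟨hvC, h⟩
        have hvF : ∀ i ∈ D, v i = b i := by intro i hi; simp [hv, hi]
        have hLv : LF Ip c v = 0 := by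
          unfold LF
          rw [Finset.sum_eq_zero, Finset.sum_eq_zero, add_zero]
          · intro i hi
            by_cases hiD : i ∈ D
            · rw [hcD i hiD]; ring
            · have hiIp : i ∉ Ip := Finset.mem_compl.mp hi
              simp [hv, hiD, hiIp]
          · intro i hi
            by_cases hiD : i ∈ D
            · rw [hcD i hiD]; ring
            · simp [hv, hiD, hi]
        have hfin := hvalid v hvS hvF
        rw [hLv] at hfin
        linarith


theorem cube_finite (n : ℕ) : (CubeVerts n).Finite := by
  have hsub : CubeVerts n ⊆ Set.pi Set.univ (fun _ : Fin n => ({0, 1} : Set ℝ)) := by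
    intro x hx i _
    rcases hx i with h | h
    · exact Set.mem_insert_iff.mpr (Or.inl h)
    · exact Set.mem_insert_iff.mpr (Or.inr (Set.mem_singleton_iff.mpr h))
  exact (Set.Finite.pi fun _ => (Set.finite_singleton (1 : ℝ)).insert 0).subset hsub

theorem sep_std {n : ℕ} (S : Set (Fin n → ℝ)) (hSsub : S ⊆ CubeVerts n)
    (x : Fin n → ℝ) (hx : x ∈ Set.Icc (0 : Fin n → ℝ) 1)
    (hall : ∀ (Ip : Finset (Fin n)) (c : Fin n → ℝ) (δ : ℝ), (∀ i, 0 ≤ c i) → 0 ≤ δ →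
      (∀ s ∈ S, δ ≤ LF Ip c s) → δ ≤ LF Ip c x) :
    x ∈ convexHull ℝ S := by
  by_contra hxc
  have hSfin : S.Finite := (cube_finite n).subset hSsub
  have hclosed : IsClosed (convexHull ℝ S) := (hSfin.isCompact_convexHull ℝ).isClosed
  have hconv : Convex ℝ (convexHull ℝ S) := convex_convexHull ℝ S
  obtain ⟨f, u, hfu, hux⟩ := geometric_hahn_banach_closed_point hconv hclosed hxc
  classical
  set a : Fin n → ℝ := fun i => f (fun j => if i = j then 1 else 0) with ha
  have hfz : ∀ z : Fin n → ℝ, f z = ∑ i, z i * a i := by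
    intro z
    have h := LinearMap.pi_apply_eq_sum_univ (f : (Fin n → ℝ) →ₗ[ℝ] ℝ) z
    simpa [ha, smul_eq_mul] using h
  set Ip : Finset (Fin n) := Finset.univ.filter (fun i => a i ≤ 0) with hIp
  set c : Fin n → ℝ := fun i => |a i| with hc
  have hcpos : ∀ i, 0 ≤ c i := fun i => abs_nonneg _
  have hLF : ∀ z : Fin n → ℝ, LF Ip c z = (∑ i ∈ Ipᶜ, a i) - f z := by
    intro z
    rw [hfz z]
    unfold LF
    have h1 : ∑ i ∈ Ip, c i * z i = ∑ i ∈ Ip, -(z i * a i) := by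
      refine Finset.sum_congr rfl fun i hi => ?_
      have hai : a i ≤ 0 := by
        have hi2 := hi
        rw [hIp] at hi2
        exact (Finset.mem_filter.mp hi2).2
      rw [hc]
      simp only [abs_of_nonpos hai]
      ring
    have h2 : ∑ i ∈ Ipᶜ, c i * (1 - z i) = ∑ i ∈ Ipᶜ, (a i - z i * a i) := by
      refine Finset.sum_congr rfl fun i hi => ?_
      have hi' : i ∉ Ip := Finset.mem_compl.mp hi
      have hai : ¬ a i ≤ 0 := by
        intro hcon
        exact hi' (by rw [hIp]; exact Finset.mem_filter.mpr ⟨Finset.mem_univ i, hcon⟩)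
      have hai' : 0 ≤ a i := le_of_lt (lt_of_not_ge hai)
      rw [hc]
      simp only [abs_of_nonneg hai']
      ring
    rw [h1, h2]
    rw [Finset.sum_neg_distrib, Finset.sum_sub_distrib]
    have hsplit : ∑ i, z i * a i = ∑ i ∈ Ip, z i * a i + ∑ i ∈ Ipᶜ, z i * a i :=
      (Finset.sum_add_sum_compl Ip _).symm
    rw [hsplit]
    ring
  set δ' : ℝ := (∑ i ∈ Ipᶜ, a i) - u with hδ'
  have hvalidS : ∀ s ∈ S, δ' ≤ LF Ip c s := by
    intro s hs
    have hfs : f s < u := hfu s (subset_convexHull ℝ S hs)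
    rw [hLF s, hδ']
    linarith
  have hxviol : LF Ip c x < δ' := by
    rw [hLF x, hδ']
    linarith
  have hδpos : 0 ≤ δ' := le_of_lt (lt_of_le_of_lt (LF_nonneg Ip c x hcpos hx) hxviol)
  have := hall Ip c δ' hcpos hδpos hvalidS
  linarith

theorem stmt8 {n : ℕ} (φ : Fml n) (S Q : Set (Fin n → ℝ))
    (hS : S = {x ∈ CubeVerts n | φ.eval x}) (hSne : S.Nonempty)
    (hQconv : Convex ℝ Q) (hQcube : Q ⊆ Set.Icc (0 : Fin n → ℝ) 1) (hSQ : S ⊆ Q)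
    (ν : ℕ) (hν : 1 ≤ ν)
    (hnotch : ∀ (Ip : Finset (Fin n)) (c : Fin n → ℝ) (δ : ℝ),
      (∀ i, 0 ≤ c i) → 0 ≤ δ → StdValid Ip c δ S → NotchLE c δ ν) :
    φ.iterApp ν Q = convexHull ℝ S := by
  apply Set.Subset.antisymm
  · -- hard direction: φ^ν(Q) ⊆ conv S
    intro x hx
    have hxbox : x ∈ Set.Icc (0 : Fin n → ℝ) 1 :=
      hQcube (Fml.iterApp_subset φ Q hQconv ν hx)
    have hSsub : S ⊆ CubeVerts n := by rw [hS]; exact Set.sep_subset _ _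
    refine sep_std S hSsub x hxbox ?_
    intro Ip c δ hc hδ hvalid
    have hSV : StdValid Ip c δ S := by
      intro s hs
      have h := hvalid s hs
      unfold LF at h
      exact h
    have hn : NotchLE c δ ν := hnotch Ip c δ hc hδ hSV
    exact master φ S Q hS hQconv hQcube ν ∅ (fun _ => 0) (by simp) Ip c δ hc
      (by simp) (fun s hs _ => hvalid s hs) (fun J _ hcard => hn J hcard) x hx (by simp)
  · -- easy direction: conv S ⊆ φ^ν(Q)
    have hconv := Fml.iterApp_convex φ Q hQconv ν
    refine convexHull_min ?_ hconv
    intro s hs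
    have hk : ∀ k, s ∈ φ.iterApp k Q := by
      intro k
      induction k with
      | zero => exact hSQ hs
      | succ k ih =>
          exact Fml.mem_app_of_eval φ _ s ih (by rw [hS] at hs; exact hs.2)
    exact hk ν
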